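/- Let p ≥ 1, k ≥ 1, let α : Fin k → ℝ with α j > 0 and ∑ j, α j = 1, and let t : Fin k → (Fin p → ℝ). Let μ = ∑ j, α j • N(t j, I_p) be the Gaussian mixture on Fin p → ℝ, with mean m = ∑ j, α j • t j and centered centers c j = t j − m. Then for every index a, ∫ (x a − m a)⁴ dμ = ∑ j, α j · ((c j a)⁴ + 6(c j a)² + 3), and for all distinct indices a ≠ b, ∫ (x a − m a)²(x b − m b)² dμ = ∑ j, α j · ((c j a)² + 1)((c j b)² + 1). -/

import Mathlib

open MeasureTheory ProbabilityTheory Matrix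

/-- The mean vector of a measure on `Fin p → ℝ`. -/
noncomputable def meanVec {p : ℕ} (μ : Measure (Fin p → ℝ)) : Fin p → ℝ :=
  fun a => ∫ x, x a ∂μ

/-- The covariance matrix `COV(μ)` with entries `∫ (x a − m a)(x b − m b) dμ`. -/
noncomputable def COV {p : ℕ} (μ : Measure (Fin p → ℝ)) : Matrix (Fin p) (Fin p) ℝ :=
  Matrix.of fun a b => ∫ x, (x a - meanVec μ a) * (x b - meanVec μ b) ∂μ

/-- The fourth-order scatter matrix `COV4(μ)` with entries
`(1/(p+2)) ∫ ((x−m)ᵀ (COV μ)⁻¹ (x−m)) (x a − m a)(x b − m b) dμ`. -/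
noncomputable def COV4 {p : ℕ} (μ : Measure (Fin p → ℝ)) : Matrix (Fin p) (Fin p) ℝ :=
  Matrix.of fun a b =>
    (1 / ((p : ℝ) + 2)) *
      ∫ x, (dotProduct (fun i => x i - meanVec μ i)
          ((COV μ)⁻¹.mulVec fun i => x i - meanVec μ i)) *
        ((x a - meanVec μ a) * (x b - meanVec μ b)) ∂μ

/-- The product Gaussian measure `N(t, I_p)` on `Fin p → ℝ`. -/
noncomputable def gaussPi (p : ℕ) (t : Fin p → ℝ) : Measure (Fin p → ℝ) :=
  Measure.pi fun i => gaussianReal (t i) 1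

section Aux

open Real Filter

noncomputable def stdK : ℝ → ℝ := fun x => Real.exp (-(1/2 : ℝ) * x ^ 2)

lemma pow_le_factorial_mul_exp (n : ℕ) {y : ℝ} (hy : 0 ≤ y) :
    y ^ n ≤ n.factorial * Real.exp y := by
  have h := Real.sum_le_exp_of_nonneg hy (n + 1)
  have h2 : y ^ n / n.factorial ≤ ∑ i ∈ Finset.range (n+1), y ^ i / i.factorial := by
    refine Finset.single_le_sum (f := fun i => y ^ i / (i.factorial : ℝ)) ?_ (Finset.self_mem_range_succ n)
    intro i _; positivity
  have h3 : y ^ n / n.factorial ≤ Real.exp y := h2.trans h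
  have hfac : (0:ℝ) < n.factorial := by positivity
  calc y ^ n = n.factorial * (y ^ n / n.factorial) := by field_simp
    _ ≤ n.factorial * Real.exp y := by
        exact mul_le_mul_of_nonneg_left h3 (le_of_lt hfac)

lemma integrable_pow_stdK (n : ℕ) : Integrable (fun x : ℝ => x ^ n * stdK x) := by
  have h1 : Integrable (fun x : ℝ => Real.exp (-(1/2 : ℝ) * x ^ 2)) :=
    integrable_exp_neg_mul_sq (by norm_num)
  have h2 : Integrable (fun x : ℝ => Real.exp (-(1/4 : ℝ) * x ^ 2)) :=
    integrable_exp_neg_mul_sq (by norm_num)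
  refine (h1.add (h2.const_mul ((n.factorial : ℝ) * 4 ^ n))).mono'
    (Continuous.aestronglyMeasurable (by unfold stdK; fun_prop)) (ae_of_all _ fun x => ?_)
  simp only [Pi.add_apply]
  have hexp : (0:ℝ) < Real.exp (-(1/2 : ℝ) * x ^ 2) := Real.exp_pos _
  have habs : ‖x ^ n * stdK x‖ = |x| ^ n * Real.exp (-(1/2 : ℝ) * x ^ 2) := by
    unfold stdK
    rw [norm_mul, norm_pow, Real.norm_eq_abs, Real.norm_eq_abs, abs_of_pos hexp]
  rw [habs]
  rcases le_total (|x|) 1 with hx | hx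
  · have : |x| ^ n ≤ 1 := pow_le_one₀ (abs_nonneg x) hx
    have hle : |x| ^ n * Real.exp (-(1/2 : ℝ) * x ^ 2) ≤ Real.exp (-(1/2 : ℝ) * x ^ 2) := by
      nlinarith [Real.exp_pos (-(1/2 : ℝ) * x ^ 2)]
    refine hle.trans ?_
    have : (0:ℝ) ≤ (n.factorial : ℝ) * 4 ^ n * Real.exp (-(1/4 : ℝ) * x ^ 2) := by positivity
    linarith
  · have h4 : |x| ^ n ≤ (x ^ 2) ^ n := by
      calc |x| ^ n ≤ (|x| ^ 2) ^ n := by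
            refine pow_le_pow_left₀ (abs_nonneg x) ?_ n
            nlinarith
        _ = (x ^ 2) ^ n := by rw [sq_abs]
    have h5 : (x ^ 2) ^ n ≤ (n.factorial : ℝ) * 4 ^ n * Real.exp ((1/4 : ℝ) * x ^ 2) := by
      have := pow_le_factorial_mul_exp n (y := (1/4 : ℝ) * x ^ 2) (by positivity)
      calc (x ^ 2) ^ n = (4 * ((1/4 : ℝ) * x ^ 2)) ^ n := by congr 1; ring
        _ = 4 ^ n * ((1/4 : ℝ) * x ^ 2) ^ n := mul_pow _ _ _
        _ ≤ 4 ^ n * ((n.factorial : ℝ) * Real.exp ((1/4 : ℝ) * x ^ 2)) := by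
            exact mul_le_mul_of_nonneg_left this (by positivity)
        _ = (n.factorial : ℝ) * 4 ^ n * Real.exp ((1/4 : ℝ) * x ^ 2) := by ring
    have h6 : |x| ^ n * Real.exp (-(1/2 : ℝ) * x ^ 2)
        ≤ (n.factorial : ℝ) * 4 ^ n * Real.exp ((1/4 : ℝ) * x ^ 2) * Real.exp (-(1/2 : ℝ) * x ^ 2) :=
      mul_le_mul_of_nonneg_right (h4.trans h5) (le_of_lt hexp)
    have h7 : Real.exp ((1/4 : ℝ) * x ^ 2) * Real.exp (-(1/2 : ℝ) * x ^ 2)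
        = Real.exp (-(1/4 : ℝ) * x ^ 2) := by
      rw [← Real.exp_add]; ring_nf
    have h9 : (n.factorial : ℝ) * 4 ^ n * Real.exp ((1/4 : ℝ) * x ^ 2) * Real.exp (-(1/2 : ℝ) * x ^ 2)
        = (n.factorial : ℝ) * 4 ^ n * Real.exp (-(1/4 : ℝ) * x ^ 2) := by
      rw [mul_assoc, h7]
    linarith [Real.exp_pos (-(1/2:ℝ) * x ^ 2)]

lemma hasDerivAt_negK (x : ℝ) : HasDerivAt (fun y : ℝ => -stdK y) (x * stdK x) x := by
  have h : HasDerivAt (fun y : ℝ => -(1/2 : ℝ) * y ^ 2) (-(1/2 : ℝ) * (2 * x)) x := by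
    simpa using ((hasDerivAt_pow 2 x).const_mul (-(1/2 : ℝ)))
  have := (h.exp).neg
  have e : x * stdK x = -(Real.exp (-(1/2 : ℝ) * x ^ 2) * (-(1/2 : ℝ) * (2 * x))) := by
    unfold stdK; ring
  rw [e]; exact this

lemma tendsto_negK_atTop : Filter.Tendsto (fun y : ℝ => -stdK y) atTop (nhds 0) := by
  rw [show (0:ℝ) = -0 by ring]
  refine Filter.Tendsto.neg ?_
  have h1 : Filter.Tendsto (fun y : ℝ => -(1/2 : ℝ) * y ^ 2) atTop atBot := by
    refine Filter.Tendsto.const_mul_atTop_of_neg (by norm_num) (tendsto_pow_atTop (by norm_num))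
  exact Real.tendsto_exp_atBot.comp h1

lemma tendsto_negK_atBot : Filter.Tendsto (fun y : ℝ => -stdK y) atBot (nhds 0) := by
  rw [show (0:ℝ) = -0 by ring]
  refine Filter.Tendsto.neg ?_
  have h1 : Filter.Tendsto (fun y : ℝ => -(1/2 : ℝ) * y ^ 2) atBot atBot := by
    have h2 : Filter.Tendsto (fun y : ℝ => y ^ 2) atBot atTop := by
      have h3 := (tendsto_pow_atTop (n := 2) (by norm_num : (2:ℕ) ≠ 0)).comp
        (tendsto_neg_atBot_atTop : Filter.Tendsto (fun y : ℝ => -y) atBot atTop)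
      refine h3.congr fun y => ?_
      simp [Function.comp]
    exact Filter.Tendsto.const_mul_atTop_of_neg (by norm_num) h2
  exact Real.tendsto_exp_atBot.comp h1

lemma J0 : ∫ x : ℝ, stdK x = Real.sqrt (2 * π) := by
  have h := integral_gaussian (1/2 : ℝ)
  unfold stdK
  rw [h, show π / (1/2 : ℝ) = 2 * π by ring]

lemma J1 : ∫ x : ℝ, x * stdK x = 0 := by
  have := MeasureTheory.integral_of_hasDerivAt_of_tendsto (f := fun y : ℝ => -stdK y)
    (f' := fun x : ℝ => x * stdK x) hasDerivAt_negK
    (by simpa [pow_one] using integrable_pow_stdK 1) tendsto_negK_atBot tendsto_negK_atTop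
  simpa using this

lemma Jrec (n : ℕ) : ∫ x : ℝ, x ^ (n + 2) * stdK x = (n + 1 : ℝ) * ∫ x : ℝ, x ^ n * stdK x := by
  have hu : ∀ x : ℝ, HasDerivAt (fun y : ℝ => y ^ (n+1)) (((n:ℝ)+1) * x ^ n) x := by
    intro x; simpa using hasDerivAt_pow (n+1) x
  have key := MeasureTheory.integral_mul_deriv_eq_deriv_mul_of_integrable
    (u := fun y : ℝ => y ^ (n+1)) (v := fun y : ℝ => -stdK y)
    (u' := fun x : ℝ => ((n:ℝ)+1) * x ^ n) (v' := fun x : ℝ => x * stdK x)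
    (fun x _ => hu x) (fun x _ => hasDerivAt_negK x)
    ((integrable_pow_stdK (n+2)).congr (ae_of_all _ fun x => by
      simp only [Pi.mul_apply]; ring))
    ((((integrable_pow_stdK n).const_mul ((n:ℝ)+1)).neg).congr (ae_of_all _ fun x => by
      simp only [Pi.neg_apply, Pi.mul_apply]; ring))
    (((integrable_pow_stdK (n+1)).neg).congr (ae_of_all _ fun x => by
      simp only [Pi.neg_apply, Pi.mul_apply]; ring))
  have hl : ∫ x : ℝ, x ^ (n+1) * (x * stdK x) = ∫ x : ℝ, x ^ (n+2) * stdK x := by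
    congr 1; funext x; ring
  have hr : ∫ x : ℝ, (((n:ℝ)+1) * x ^ n) * (-stdK x) = -(((n:ℝ)+1) * ∫ x : ℝ, x ^ n * stdK x) := by
    rw [show (fun x : ℝ => (((n:ℝ)+1) * x ^ n) * (-stdK x)) = fun x : ℝ => -(((n:ℝ)+1) * (x ^ n * stdK x)) from by funext x; ring]
    rw [integral_neg, integral_const_mul]
  rw [hl, hr] at key
  rw [key]; push_cast; ring

lemma J2 : ∫ x : ℝ, x ^ 2 * stdK x = Real.sqrt (2 * π) := by
  have := Jrec 0
  simp only [pow_zero, one_mul] at this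
  rw [show (0:ℕ)+2 = 2 from rfl] at this
  rw [this, J0]; norm_num

lemma J3 : ∫ x : ℝ, x ^ 3 * stdK x = 0 := by
  have := Jrec 1
  rw [show (1:ℕ)+2 = 3 from rfl] at this
  rw [this]
  have h1 : ∫ x : ℝ, x ^ 1 * stdK x = 0 := by simpa using J1
  rw [h1]; ring

lemma J4 : ∫ x : ℝ, x ^ 4 * stdK x = 3 * Real.sqrt (2 * π) := by
  have := Jrec 2
  rw [show (2:ℕ)+2 = 4 from rfl] at this
  rw [this, J2]; norm_num

lemma pdf01 (x : ℝ) : gaussianPDFReal 0 1 x = (Real.sqrt (2 * π))⁻¹ * stdK x := by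
  unfold stdK
  simp only [gaussianPDFReal, NNReal.coe_one, mul_one, sub_zero]
  congr 1
  ring_nf

lemma measurable_pdf01nn : Measurable (fun x : ℝ => Real.toNNReal (gaussianPDFReal 0 1 x)) :=
  (measurable_gaussianPDFReal 0 1).real_toNNReal

lemma std_withDensity :
    gaussianReal 0 1 = MeasureTheory.Measure.withDensity volume
      (fun x => ((Real.toNNReal (gaussianPDFReal 0 1 x) : NNReal) : ENNReal)) := by
  rw [gaussianReal_of_var_ne_zero 0 one_ne_zero]
  rfl

lemma integral_std (g : ℝ → ℝ) :
    ∫ z, g z ∂(gaussianReal 0 1) = ∫ x, gaussianPDFReal 0 1 x * g x := by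
  rw [std_withDensity, integral_withDensity_eq_integral_smul measurable_pdf01nn g]
  congr 1; funext x
  simp [NNReal.smul_def, Real.coe_toNNReal _ (gaussianPDFReal_nonneg 0 1 x)]

lemma integrable_std_iff (g : ℝ → ℝ) :
    Integrable g (gaussianReal 0 1) ↔ Integrable (fun x => gaussianPDFReal 0 1 x * g x) := by
  rw [std_withDensity, integrable_withDensity_iff_integrable_smul measurable_pdf01nn]
  constructor <;> intro h <;> refine h.congr (ae_of_all _ fun x => ?_) <;>
    simp [NNReal.smul_def, Real.coe_toNNReal _ (gaussianPDFReal_nonneg 0 1 x)]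

lemma integrable_std_pow (n : ℕ) : Integrable (fun z : ℝ => z ^ n) (gaussianReal 0 1) := by
  rw [integrable_std_iff]
  refine ((integrable_pow_stdK n).const_mul (Real.sqrt (2 * π))⁻¹).congr (ae_of_all _ fun x => ?_)
  simp only [pdf01]; ring

lemma Mstd (n : ℕ) :
    ∫ z, z ^ n ∂(gaussianReal 0 1) = (Real.sqrt (2 * π))⁻¹ * ∫ x : ℝ, x ^ n * stdK x := by
  rw [integral_std]
  rw [show (fun x : ℝ => gaussianPDFReal 0 1 x * x ^ n)
      = fun x : ℝ => (Real.sqrt (2 * π))⁻¹ * (x ^ n * stdK x) from by funext x; simp only [pdf01]; ring]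
  rw [integral_const_mul]

lemma sqrt2pi_ne : Real.sqrt (2 * π) ≠ 0 := by
  refine ne_of_gt (Real.sqrt_pos.mpr ?_)
  positivity

lemma M0 : ∫ z, z ^ 0 ∂(gaussianReal 0 1) = 1 := by
  rw [Mstd]
  simp only [pow_zero, one_mul]
  rw [J0, inv_mul_cancel₀ sqrt2pi_ne]

lemma M1 : ∫ z, z ^ 1 ∂(gaussianReal 0 1) = 0 := by
  rw [Mstd]
  have : ∫ x : ℝ, x ^ 1 * stdK x = 0 := by simpa using J1
  rw [this, mul_zero]

lemma M2 : ∫ z, z ^ 2 ∂(gaussianReal 0 1) = 1 := by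
  rw [Mstd, J2, inv_mul_cancel₀ sqrt2pi_ne]

lemma M3 : ∫ z, z ^ 3 ∂(gaussianReal 0 1) = 0 := by
  rw [Mstd, J3, mul_zero]

lemma M4 : ∫ z, z ^ 4 ∂(gaussianReal 0 1) = 3 := by
  rw [Mstd, J4]
  field_simp

lemma gauss_shift (s : ℝ) : gaussianReal s 1 = (gaussianReal 0 1).map (· + s) := by
  rw [gaussianReal_map_add_const, zero_add]

lemma integral_gauss_shift (s : ℝ) {g : ℝ → ℝ} (hg : Continuous g) :
    ∫ y, g y ∂(gaussianReal s 1) = ∫ z, g (z + s) ∂(gaussianReal 0 1) := by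
  rw [gauss_shift s, integral_map (measurable_add_const s).aemeasurable
    hg.aestronglyMeasurable]

lemma integrable_shift_pow (d : ℝ) (n : ℕ) :
    Integrable (fun z : ℝ => (z + d) ^ n) (gaussianReal 0 1) := by
  have : (fun z : ℝ => (z + d) ^ n)
      = fun z : ℝ => ∑ m ∈ Finset.range (n+1), z ^ m * d ^ (n - m) * (n.choose m : ℝ) := by
    funext z; rw [add_pow]
  rw [this]
  refine integrable_finset_sum _ fun m _ => ?_
  exact ((integrable_std_pow m).mul_const _).mul_const _

lemma integrable_gauss_sub_pow (s r : ℝ) (n : ℕ) :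
    Integrable (fun y : ℝ => (y - r) ^ n) (gaussianReal s 1) := by
  rw [gauss_shift s]
  rw [integrable_map_measure (Continuous.aestronglyMeasurable (by fun_prop))
    (measurable_add_const s).aemeasurable]
  have : ((fun y : ℝ => (y - r) ^ n) ∘ (· + s)) = fun z : ℝ => (z + (s - r)) ^ n := by
    funext z; simp [Function.comp]; ring_nf
  rw [this]
  exact integrable_shift_pow (s - r) n

lemma integral_shift_pow (d : ℝ) (n : ℕ) :
    ∫ z, (z + d) ^ n ∂(gaussianReal 0 1)
      = ∑ m ∈ Finset.range (n+1), (∫ z, z ^ m ∂(gaussianReal 0 1)) * d ^ (n - m) * (n.choose m : ℝ) := by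
  rw [show (fun z : ℝ => (z + d) ^ n)
      = fun z : ℝ => ∑ m ∈ Finset.range (n+1), z ^ m * d ^ (n - m) * (n.choose m : ℝ) from by
    funext z; rw [add_pow]]
  rw [integral_finset_sum _ fun m _ => ((integrable_std_pow m).mul_const _).mul_const _]
  refine Finset.sum_congr rfl fun m _ => ?_
  rw [integral_mul_const, integral_mul_const]

lemma M1' : ∫ z, z ∂(gaussianReal 0 1) = 0 := by simpa using M1

lemma gauss_moment2 (s r : ℝ) :
    ∫ y, (y - r) ^ 2 ∂(gaussianReal s 1) = (s - r) ^ 2 + 1 := by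
  rw [integral_gauss_shift s (by fun_prop)]
  have : (fun z : ℝ => (z + s - r) ^ 2) = fun z : ℝ => (z + (s - r)) ^ 2 := by
    funext z; ring
  simp only [this]
  rw [integral_shift_pow]
  simp [Finset.sum_range_succ, M0, M1', M2]

lemma gauss_moment4 (s r : ℝ) :
    ∫ y, (y - r) ^ 4 ∂(gaussianReal s 1) = (s - r) ^ 4 + 6 * (s - r) ^ 2 + 3 := by
  rw [integral_gauss_shift s (by fun_prop)]
  have : (fun z : ℝ => (z + s - r) ^ 4) = fun z : ℝ => (z + (s - r)) ^ 4 := by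
    funext z; ring
  simp only [this]
  rw [integral_shift_pow]
  simp [Finset.sum_range_succ, M0, M1', M2, M3, M4, Nat.choose]
  ring

lemma gaussPi_integral_prod {p : ℕ} (t : Fin p → ℝ) (f : Fin p → ℝ → ℝ) :
    ∫ x, ∏ i, f i (x i) ∂(gaussPi p t) = ∏ i, ∫ y, f i y ∂(gaussianReal (t i) 1) := by
  have h := @MeasureTheory.integral_fintype_prod_eq_prod ℝ (Fin p) _ _ (fun _ => ℝ) f
    (fun _ => inferInstance) (fun i => gaussianReal (t i) 1)
    (fun i => inferInstanceAs (SigmaFinite (gaussianReal (t i) 1)))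
  exact h

lemma gaussPi_integrable_prod {p : ℕ} (t : Fin p → ℝ) (f : Fin p → ℝ → ℝ)
    (hf : ∀ i, Integrable (f i) (gaussianReal (t i) 1)) :
    Integrable (fun x : Fin p → ℝ => ∏ i, f i (x i)) (gaussPi p t) := by
  have h := @MeasureTheory.Integrable.fintype_prod_dep ℝ (Fin p) _ _ (fun _ => ℝ) f
    (fun _ => inferInstance) (fun i => gaussianReal (t i) 1)
    (fun i => inferInstanceAs (SigmaFinite (gaussianReal (t i) 1))) hf
  exact h

lemma gaussPi_integral_single {p : ℕ} (t : Fin p → ℝ) (a : Fin p) (g : ℝ → ℝ) :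
    ∫ x, g (x a) ∂(gaussPi p t) = ∫ y, g y ∂(gaussianReal (t a) 1) := by
  have key := gaussPi_integral_prod t (fun i y => if i = a then g y else 1)
  have hl : ∀ x : Fin p → ℝ, (∏ i, if i = a then g (x i) else 1) = g (x a) :=
    fun x => Fintype.prod_ite_eq' a (fun i => g (x i))
  simp only [hl] at key
  rw [key]
  rw [Finset.prod_eq_single a ?h1 (by simp)]
  · simp
  · intro i _ hne
    simp [hne]

lemma gaussPi_integrable_single {p : ℕ} (t : Fin p → ℝ) (a : Fin p) (g : ℝ → ℝ)
    (hg : Integrable g (gaussianReal (t a) 1)) :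
    Integrable (fun x : Fin p → ℝ => g (x a)) (gaussPi p t) := by
  have key := gaussPi_integrable_prod t (fun i y => if i = a then g y else 1) ?hf
  · refine key.congr (ae_of_all _ fun x => ?_)
    exact Fintype.prod_ite_eq' a (fun i => g (x i))
  · intro i
    by_cases hi : i = a
    · subst hi; simpa using hg
    · simp only [hi, if_false]
      exact integrable_const 1

lemma gaussPi_integral_pair {p : ℕ} (t : Fin p → ℝ) {a b : Fin p} (hab : a ≠ b) (g h : ℝ → ℝ) :
    ∫ x, g (x a) * h (x b) ∂(gaussPi p t)
      = (∫ y, g y ∂(gaussianReal (t a) 1)) * ∫ y, h y ∂(gaussianReal (t b) 1) := by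
  have key := gaussPi_integral_prod t
    (fun i y => (if i = a then g y else 1) * (if i = b then h y else 1))
  have hl : ∀ x : Fin p → ℝ,
      (∏ i, (if i = a then g (x i) else 1) * (if i = b then h (x i) else 1))
        = g (x a) * h (x b) := by
    intro x
    rw [Finset.prod_mul_distrib, Fintype.prod_ite_eq' a (fun i => g (x i)),
      Fintype.prod_ite_eq' b (fun i => h (x i))]
  simp only [hl] at key
  rw [key]
  rw [← Finset.prod_subset (Finset.subset_univ {a, b}) ?hout]
  · rw [Finset.prod_pair hab]
    congr 1
    · have : (fun y => (if a = a then g y else 1) * (if a = b then h y else 1)) = g := by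
        funext y; simp [hab]
      rw [this]
    · have : (fun y => (if b = a then g y else 1) * (if b = b then h y else 1)) = h := by
        funext y; simp [hab.symm]
      rw [this]
  · intro i _ hi
    simp only [Finset.mem_insert, Finset.mem_singleton, not_or] at hi
    have : (fun y => (if i = a then g y else 1) * (if i = b then h y else 1)) = fun _ => (1:ℝ) := by
      funext y; simp [hi.1, hi.2]
    rw [this]
    simp

lemma gaussPi_integrable_pair {p : ℕ} (t : Fin p → ℝ) {a b : Fin p} (hab : a ≠ b) (g h : ℝ → ℝ)
    (hg : Integrable g (gaussianReal (t a) 1)) (hh : Integrable h (gaussianReal (t b) 1)) :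
    Integrable (fun x : Fin p → ℝ => g (x a) * h (x b)) (gaussPi p t) := by
  have key := gaussPi_integrable_prod t
    (fun i y => (if i = a then g y else 1) * (if i = b then h y else 1)) ?hf
  · refine key.congr (ae_of_all _ fun x => ?_)
    show (∏ i, (if i = a then g (x i) else 1) * if i = b then h (x i) else 1)
        = g (x a) * h (x b)
    rw [Finset.prod_mul_distrib, Fintype.prod_ite_eq' a (fun i => g (x i)),
      Fintype.prod_ite_eq' b (fun i => h (x i))]
  · intro i
    show Integrable (fun y => (if i = a then g y else 1) * if i = b then h y else 1)
      (gaussianReal (t i) 1)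
    by_cases hia : i = a
    · have e : (fun y => (if i = a then g y else 1) * (if i = b then h y else 1))
          = fun y => g y := by
        funext y; rw [if_pos hia, if_neg (by rw [hia]; exact hab), mul_one]
      rw [e, hia]
      exact hg
    · by_cases hib : i = b
      · have e : (fun y => (if i = a then g y else 1) * (if i = b then h y else 1))
            = fun y => h y := by
          funext y; rw [if_neg hia, if_pos hib, one_mul]
        rw [e, hib]
        exact hh
      · have e : (fun y => (if i = a then g y else 1) * (if i = b then h y else 1))
            = fun _ => (1:ℝ) := by
          funext y; rw [if_neg hia, if_neg hib, mul_one]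
        rw [e]
        exact integrable_const 1

lemma integral_mix {k : ℕ} {X : Type*} [MeasurableSpace X] (α : Fin k → ℝ) (hα : ∀ j, 0 ≤ α j)
    (ν : Fin k → Measure X) (f : X → ℝ) (hf : ∀ j, Integrable f (ν j)) :
    ∫ x, f x ∂(∑ j, ENNReal.ofReal (α j) • ν j) = ∑ j, α j * ∫ x, f x ∂(ν j) := by
  rw [MeasureTheory.integral_finset_sum_measure
    (fun j _ => (hf j).smul_measure ENNReal.ofReal_ne_top)]
  refine Finset.sum_congr rfl fun j _ => ?_
  rw [integral_smul_measure, ENNReal.toReal_ofReal (hα j), smul_eq_mul]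

end Aux

/-- Fourth-order moments of a Gaussian mixture `∑ j, α j • N(t j, I_p)`:
`E[(x a − m a)⁴] = ∑ j α j ((c j a)⁴ + 6 (c j a)² + 3)` and, for `a ≠ b`,
`E[(x a − m a)² (x b − m b)²] = ∑ j α j ((c j a)² + 1)((c j b)² + 1)`. -/
theorem gaussian_mixture_fourth_moments (p k : ℕ) (hp : 1 ≤ p) (hk : 1 ≤ k)
    (α : Fin k → ℝ) (hα : ∀ j, 0 < α j) (hsum : ∑ j, α j = 1)
    (t : Fin k → Fin p → ℝ)
    (μ : Measure (Fin p → ℝ))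
    (hμ : μ = ∑ j, ENNReal.ofReal (α j) • gaussPi p (t j))
    (m : Fin p → ℝ) (hm : m = ∑ j, α j • t j)
    (c : Fin k → Fin p → ℝ) (hc : ∀ j, c j = t j - m) :
    (∀ a : Fin p, ∫ x, (x a - m a) ^ 4 ∂μ =
        ∑ j, α j * ((c j a) ^ 4 + 6 * (c j a) ^ 2 + 3)) ∧
      (∀ a b : Fin p, a ≠ b →
        ∫ x, (x a - m a) ^ 2 * (x b - m b) ^ 2 ∂μ =
          ∑ j, α j * (((c j a) ^ 2 + 1) * ((c j b) ^ 2 + 1))) := by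
  have hca : ∀ (j : Fin k) (a : Fin p), c j a = t j a - m a := by
    intro j a; rw [hc j]; simp
  constructor
  · intro a
    have hint : ∀ j, Integrable (fun x : Fin p → ℝ => (x a - m a) ^ 4) (gaussPi p (t j)) :=
      fun j => gaussPi_integrable_single (t j) a (fun y => (y - m a) ^ 4)
        (integrable_gauss_sub_pow _ _ 4)
    rw [hμ, integral_mix α (fun j => (hα j).le) _ _ hint]
    refine Finset.sum_congr rfl fun j _ => ?_
    congr 1
    rw [show (fun x : Fin p → ℝ => (x a - m a) ^ 4)
        = fun x : Fin p → ℝ => (fun y => (y - m a) ^ 4) (x a) from rfl]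
    rw [gaussPi_integral_single (t j) a (fun y => (y - m a) ^ 4), gauss_moment4, hca j a]
  · intro a b hab
    have hint : ∀ j, Integrable (fun x : Fin p → ℝ => (x a - m a) ^ 2 * (x b - m b) ^ 2)
        (gaussPi p (t j)) :=
      fun j => gaussPi_integrable_pair (t j) hab (fun y => (y - m a) ^ 2) (fun y => (y - m b) ^ 2)
        (integrable_gauss_sub_pow _ _ 2) (integrable_gauss_sub_pow _ _ 2)
    rw [hμ, integral_mix α (fun j => (hα j).le) _ _ hint]
    refine Finset.sum_congr rfl fun j _ => ?_
    congr 1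
    rw [show (fun x : Fin p → ℝ => (x a - m a) ^ 2 * (x b - m b) ^ 2)
        = fun x : Fin p → ℝ => (fun y => (y - m a) ^ 2) (x a) * (fun y => (y - m b) ^ 2) (x b)
        from rfl]
    rw [gaussPi_integral_pair (t j) hab (fun y => (y - m a) ^ 2) (fun y => (y - m b) ^ 2),
      gauss_moment2, gauss_moment2, hca j a, hca j b]
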